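/- Let M' be a non-degenerate hypersurface of a pseudo-Riemannian manifold (M,g) with affine connection ∇, unit normal N (g(N,N)=ε=±1), Gauss formula ∇_X Y=∇'_X Y+α(X,Y)N and Weingarten formula ∇_X N=−B(X)+τ(X)N. Then the curvature tensors satisfy, for all X,Y,Z tangent to M': R^∇(X,Y)Z = R^{∇'}(X,Y)Z − (α(Y,Z)B(X)−α(X,Z)B(Y)) + ((∇'_X α)(Y,Z)+α(Y,Z)τ(X)−(∇'_Y α)(X,Z)−α(X,Z)τ(Y)+α(T^{∇'}(X,Y),Z))N. -/
import Mathlib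


/-!
We work in a concrete model of a pseudo-Riemannian manifold: the manifold `M` is
(an open chart of) a real normed space `E`, vector fields are maps `E → E`,
smooth functions are maps `E → ℝ`, a (pseudo-Riemannian) metric is a field of
symmetric non-degenerate bilinear forms `g : E → E →ₗ[ℝ] E →ₗ[ℝ] ℝ`, a `1`-form
is a field of linear forms `η : E → E →ₗ[ℝ] ℝ`, and an affine connection is an
operation `D : (E → E) → (E → E) → (E → E)` on vector fields which is
function-linear in the first argument and a derivation in the second one.
-/

open scoped BigOperators

noncomputable section

variable {E : Type*} [NormedAddCommGroup E] [NormedSpace ℝ E]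

/-- The derivative `X(f)` of a function `f` along a vector field `X`. -/
def dirD (f : E → ℝ) (X : E → E) : E → ℝ := fun x => fderiv ℝ f x (X x)

/-- The Lie bracket `[X, Y]` of two vector fields. -/
def lieB (X Y : E → E) : E → E := fun x => fderiv ℝ Y x (X x) - fderiv ℝ X x (Y x)

/-- The torsion tensor `T^∇(X,Y) = ∇_X Y − ∇_Y X − [X,Y]` of an affine connection. -/
def tors (D : (E → E) → (E → E) → (E → E)) (X Y : E → E) : E → E :=
  fun x => D X Y x - D Y X x - lieB X Y x

/-- The curvature tensor `R^∇(X,Y)Z = ∇_X∇_Y Z − ∇_Y∇_X Z − ∇_{[X,Y]}Z`. -/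
def curv (D : (E → E) → (E → E) → (E → E)) (X Y Z : E → E) : E → E :=
  fun x => D X (D Y Z) x - D Y (D X Z) x - D (lieB X Y) Z x

/-- The covariant derivative `(∇_X g)(Y, Z)` of the metric `g`. -/
def covg (g : E → E →ₗ[ℝ] E →ₗ[ℝ] ℝ) (D : (E → E) → (E → E) → (E → E))
    (X Y Z : E → E) : E → ℝ :=
  fun x => fderiv ℝ (fun y => g y (Y y) (Z y)) x (X x)
    - g x (D X Y x) (Z x) - g x (Y x) (D X Z x)

/-- `g` is a pseudo-Riemannian metric: a symmetric non-degenerate bilinear form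
at every point. -/
def IsMetric (g : E → E →ₗ[ℝ] E →ₗ[ℝ] ℝ) : Prop :=
  (∀ x u v, g x u v = g x v u) ∧ ∀ x u, (∀ v, g x u v = 0) → u = 0

/-- `D` is an affine connection on vector fields. -/
def IsConn (D : (E → E) → (E → E) → (E → E)) : Prop :=
  (∀ X Y Z, D (fun x => X x + Y x) Z = fun x => D X Z x + D Y Z x) ∧
  (∀ (f : E → ℝ) (X Y), D (fun x => f x • X x) Y = fun x => f x • D X Y x) ∧
  (∀ X Y Z, D X (fun x => Y x + Z x) = fun x => D X Y x + D X Z x) ∧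
  (∀ (f : E → ℝ) (X Y), D X (fun x => f x • Y x)
      = fun x => dirD f X x • Y x + f x • D X Y x)

/-- The connection `D` is flat: its curvature tensor vanishes identically. -/
def FlatConn (D : (E → E) → (E → E) → (E → E)) : Prop := ∀ X Y Z x, curv D X Y Z x = 0

/-- The connection `D` is torsion-free: its torsion tensor vanishes identically. -/
def TorsFree (D : (E → E) → (E → E) → (E → E)) : Prop := ∀ X Y x, tors D X Y x = 0

/-- `(M, g, ∇)` is a statistical manifold admitting torsion (SMT):
`(∇_X g)(Y,Z) = (∇_Y g)(X,Z) − g(T^∇(X,Y),Z)`. -/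
def IsSMT (g : E → E →ₗ[ℝ] E →ₗ[ℝ] ℝ) (D : (E → E) → (E → E) → (E → E)) : Prop :=
  ∀ X Y Z x, covg g D X Y Z x = covg g D Y X Z x - g x (tors D X Y x) (Z x)

/-- `(M, g, η, ∇)` is a semi-Weyl manifold admitting torsion (SWMT):
`(∇_X g)(Y,Z) + η(X)g(Y,Z) = (∇_Y g)(X,Z) + η(Y)g(X,Z) − g(T^∇(X,Y),Z)`. -/
def IsSWMT (g : E → E →ₗ[ℝ] E →ₗ[ℝ] ℝ) (η : E → E →ₗ[ℝ] ℝ)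
    (D : (E → E) → (E → E) → (E → E)) : Prop :=
  ∀ X Y Z x, covg g D X Y Z x + η x (X x) * g x (Y x) (Z x)
    = covg g D Y X Z x + η x (Y x) * g x (X x) (Z x) - g x (tors D X Y x) (Z x)

/-- `D` and `Ds` are dual connections with respect to `g`:
`X(g(Y,Z)) = g(∇_X Y, Z) + g(Y, ∇*_X Z)`. -/
def DualConn (g : E → E →ₗ[ℝ] E →ₗ[ℝ] ℝ) (D Ds : (E → E) → (E → E) → (E → E)) : Prop :=
  ∀ X Y Z x, fderiv ℝ (fun y => g y (Y y) (Z y)) x (X x)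
    = g x (D X Y x) (Z x) + g x (Y x) (Ds X Z x)

/-- `D` and `Ds` are semi-dual connections with respect to `(g, η)`:
`X(g(Y,Z)) = g(∇_X Y, Z) + g(Y, ∇*_X Z) − η(X)g(Y,Z)`. -/
def SemiDualConn (g : E → E →ₗ[ℝ] E →ₗ[ℝ] ℝ) (η : E → E →ₗ[ℝ] ℝ)
    (D Ds : (E → E) → (E → E) → (E → E)) : Prop :=
  ∀ X Y Z x, fderiv ℝ (fun y => g y (Y y) (Z y)) x (X x)
    = g x (D X Y x) (Z x) + g x (Y x) (Ds X Z x) - η x (X x) * g x (Y x) (Z x)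

/-- The Ricci tensor `Ric(Y,Z) = Σᵢ εᵢ g(R(Eᵢ,Y)Z, Eᵢ)` of a connection, computed
via a `g`-orthonormal frame `Efr` with signs `eps`. -/
def ricci (g : E → E →ₗ[ℝ] E →ₗ[ℝ] ℝ) (D : (E → E) → (E → E) → (E → E))
    {n : ℕ} (Efr : Fin n → E → E) (eps : Fin n → ℝ) (Y Z : E → E) : E → ℝ :=
  fun x => ∑ i, eps i * g x (curv D (Efr i) Y Z x) (Efr i x)

/-- `trace (T_Y) = Σᵢ εᵢ g(T^∇(Eᵢ,Y), Eᵢ)`, the trace of `X ↦ T^∇(X,Y)`. -/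
def trTor (g : E → E →ₗ[ℝ] E →ₗ[ℝ] ℝ) (D : (E → E) → (E → E) → (E → E))
    {n : ℕ} (Efr : Fin n → E → E) (eps : Fin n → ℝ) (Y : E → E) : E → ℝ :=
  fun x => ∑ i, eps i * g x (tors D (Efr i) Y x) (Efr i x)

/-- A vector field is tangent to the submanifold determined by the field of
(tangential) projections `P`. -/
def Tang (P : E → E →ₗ[ℝ] E) (X : E → E) : Prop := ∀ x, P x (X x) = X x

/-- The projection of a vector field tangent to a lightlike hypersurface onto the
screen distribution, `P X = X − g(X,N)ξ`. -/
def scrP (g : E → E →ₗ[ℝ] E →ₗ[ℝ] ℝ) (ξ N : E → E) (X : E → E) : E → E :=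
  fun x => X x - g x (X x) (N x) • ξ x

/-- The induced connection on sections of the screen distribution of a lightlike
hypersurface: the `S(TM')`-component of `∇_X Y` in `TM = S(TM') ⊕ Rad(TM') ⊕ tr(TM')`. -/
def scrConn (g : E → E →ₗ[ℝ] E →ₗ[ℝ] ℝ) (ξ N : E → E)
    (D : (E → E) → (E → E) → (E → E)) : (E → E) → (E → E) → (E → E) :=
  fun X Y x => D X Y x - g x (D X Y x) (N x) • ξ x - g x (D X Y x) (ξ x) • N x

end

/-- (Gauss equation.)  For a non-degenerate hypersurface `M'`
of `(M,g)` with affine connection `∇`, unit normal `N` (`g(N,N) = ε = ±1`), Gauss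
formula `∇_X Y = ∇'_X Y + α(X,Y)N` and Weingarten formula `∇_X N = −B(X) + τ(X)N`,
the curvature tensors satisfy
`R^∇(X,Y)Z = R^{∇'}(X,Y)Z − (α(Y,Z)B(X) − α(X,Z)B(Y))`
`+ ((∇'_X α)(Y,Z) + α(Y,Z)τ(X) − (∇'_Y α)(X,Z) − α(X,Z)τ(Y) + α(T^{∇'}(X,Y),Z))N`. -/
theorem statement16 {E : Type*} [NormedAddCommGroup E] [NormedSpace ℝ E]
    (g : E → E →ₗ[ℝ] E →ₗ[ℝ] ℝ) (hg : IsMetric g)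
    (D D' : (E → E) → (E → E) → (E → E)) (hD : IsConn D)
    (P : E → E →ₗ[ℝ] E) (N : E → E) (ε : ℝ) (hε : ε = 1 ∨ ε = -1)
    (hidem : ∀ x v, P x (P x v) = P x v)
    (hNunit : ∀ x, g x (N x) (N x) = ε)
    (hPN : ∀ x, P x (N x) = 0)
    (hPorth : ∀ x v, g x (P x v) (N x) = 0)
    (hdecomp : ∀ x v, v = P x v + (ε * g x v (N x)) • N x)
    (hinv : ∀ X Y, Tang P X → Tang P Y → Tang P (lieB X Y))
    (α : (E → E) → (E → E) → E → ℝ) (B : (E → E) → (E → E)) (τ : (E → E) → E → ℝ)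
    (hGauss : ∀ X Y, Tang P X → Tang P Y → ∀ x, D X Y x = D' X Y x + α X Y x • N x)
    (hD'tan : ∀ X Y, Tang P X → Tang P Y → Tang P (D' X Y))
    (hWein : ∀ X, Tang P X → ∀ x, D X N x = -B X x + τ X x • N x)
    (hBtan : ∀ X, Tang P X → Tang P (B X)) :
    ∀ X Y Z, Tang P X → Tang P Y → Tang P Z → ∀ x,
      curv D X Y Z x
        = curv D' X Y Z x - (α Y Z x • B X x - α X Z x • B Y x)
          + ((fderiv ℝ (fun y => α Y Z y) x (X x) - α (D' X Y) Z x - α Y (D' X Z) x)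
              + α Y Z x * τ X x
              - (fderiv ℝ (fun y => α X Z y) x (Y x) - α (D' Y X) Z x - α X (D' Y Z) x)
              - α X Z x * τ Y x
              + α (tors D' X Y) Z x) • N x := by
  obtain ⟨hadd1, hsmul1, hadd2, hleib⟩ := hD
  intro X Y Z hX hY hZ x
  have hε2 : ε * ε = 1 := by rcases hε with h | h <;> norm_num [h]
  -- α is recovered from g
  have halpha : ∀ W, Tang P W → ∀ y, α W Z y = ε * g y (D W Z y) (N y) := by
    intro W hW y
    have h := hGauss W Z hW hZ y
    have horth : g y (D' W Z y) (N y) = 0 := by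
      have ht := hD'tan W Z hW hZ y
      calc g y (D' W Z y) (N y) = g y (P y (D' W Z y)) (N y) := by rw [ht]
        _ = 0 := hPorth y _
    have hgv : g y (D W Z y) (N y) = α W Z y * ε := by
      rw [h]
      simp [map_add, LinearMap.add_apply, map_smul, LinearMap.smul_apply,
        smul_eq_mul, horth, hNunit y]
    rw [hgv, show ε * (α W Z y * ε) = α W Z y * (ε * ε) from by ring, hε2, mul_one]
  -- first-argument subtraction for D
  have hDsub : ∀ (W1 W2 V : E → E),
      D (fun z => W1 z - W2 z) V = fun z => D W1 V z - D W2 V z := by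
    intro W1 W2 V
    have h2 := hsmul1 (fun _ => (-1 : ℝ)) W2 V
    have h1 := hadd1 W1 (fun z => (-1 : ℝ) • W2 z) V
    calc D (fun z => W1 z - W2 z) V
        = D (fun z => W1 z + (-1 : ℝ) • W2 z) V := by
          congr 1; funext z; simp [sub_eq_add_neg]
      _ = fun z => D W1 V z + D (fun z => (-1 : ℝ) • W2 z) V z := h1
      _ = fun z => D W1 V z - D W2 V z := by
          rw [h2]; funext z; simp [sub_eq_add_neg]
  -- tangency of the torsion field
  have hTtan : Tang P (tors D' X Y) := by
    intro y
    have h1 := hD'tan X Y hX hY y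
    have h2 := hD'tan Y X hY hX y
    have h3 := hinv X Y hX hY y
    simp [tors, map_sub, h1, h2, h3]
  -- α applied to the torsion
  have hDtors : D (tors D' X Y) Z x
      = D (D' X Y) Z x - D (D' Y X) Z x - D (lieB X Y) Z x := by
    have e : tors D' X Y = fun z => (D' X Y z - D' Y X z) - lieB X Y z := rfl
    rw [e, hDsub (fun z => D' X Y z - D' Y X z) (lieB X Y) Z,
      hDsub (D' X Y) (D' Y X) Z]
  have htors : α (tors D' X Y) Z x
      = α (D' X Y) Z x - α (D' Y X) Z x - α (lieB X Y) Z x := by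
    rw [halpha _ hTtan x, halpha _ (hD'tan X Y hX hY) x,
      halpha _ (hD'tan Y X hY hX) x, halpha _ (hinv X Y hX hY) x, hDtors]
    simp [map_sub, LinearMap.sub_apply]
    ring
  -- expansion of D U (D V Z)
  have key : ∀ U V, Tang P U → Tang P V →
      D U (D V Z) x = D' U (D' V Z) x + α U (D' V Z) x • N x
        + fderiv ℝ (fun y => α V Z y) x (U x) • N x
        + α V Z x • (-B U x + τ U x • N x) := by
    intro U V hU hV
    have e : D V Z = fun y => D' V Z y + α V Z y • N y := funext (hGauss V Z hV hZ)
    rw [e]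
    simp only [hadd2, hleib, dirD]
    rw [hGauss U (D' V Z) hU (hD'tan V Z hV hZ) x, hWein U hU x]
    abel
  have e3 : D (lieB X Y) Z x = D' (lieB X Y) Z x + α (lieB X Y) Z x • N x :=
    hGauss _ Z (hinv X Y hX hY) hZ x
  simp only [curv]
  rw [key X Y hX hY, key Y X hY hX, e3, htors]
  module
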